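/- Under Assumptions 1, 2 and 3(b): (i) for every h ∈ ℝ^d and V ∈ S(H), the Hessian operator ∇²G_h(V) is self-adjoint on S(H) (with respect to the Frobenius inner product) and satisfies 0 ≤ ⟨∇²G_h(V)(A), A⟩_F ≤ C‖A‖_F² for all A ∈ S(H) (i.e. all its eigenvalues lie in [0,C]); (ii) there is a positive constant c_m such that ⟨∇²G_m(Γ_m)(A), A⟩_F ≥ c_m ‖A‖_F² for all A ∈ S(H); (iii) there are positive constants ε, ε' such that for all h ∈ ℝ^d with ‖h − m‖ ≤ ε and all V ∈ S(H) with ‖V − Γ_m‖_F ≤ ε', ⟨∇²G_h(V)(A), A⟩_F ≥ (c_m/2) ‖A‖_F² for all A ∈ S(H). -/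

import Mathlib

open MeasureTheory ProbabilityTheory Filter
open scoped ENNReal NNReal RealInnerProductSpace BigOperators

noncomputable section

/-- The space `S(H)` of `d × d` real matrices, viewed as a Euclidean space, so that its
norm is the Frobenius norm and its inner product `⟪A, B⟫ = ∑ i j, A i j * B i j = tr (Aᵀ B)`
is the Frobenius inner product. -/
abbrev Mat (d : ℕ) := EuclideanSpace ℝ (Fin d × Fin d)

/-- `Y(h) = (x − h)(x − h)ᵀ`. -/
def Ymat {d : ℕ} (x h : EuclideanSpace ℝ (Fin d)) : Mat d :=
  (WithLp.equiv 2 _).symm (fun p => (x p.1 - h p.1) * (x p.2 - h p.2))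

variable {d : ℕ} {Ω : Type*} [MeasurableSpace Ω]

/-- `G_h(V) = E[‖Y(h) − V‖_F − ‖Y(h)‖_F]`. -/
def Gfun (P : Measure Ω) (X : Ω → EuclideanSpace ℝ (Fin d))
    (h : EuclideanSpace ℝ (Fin d)) (V : Mat d) : ℝ :=
  ∫ ω, (‖Ymat (X ω) h - V‖ - ‖Ymat (X ω) h‖) ∂P

/-- The gradient `∇G_h(V) = −E[(Y(h) − V)/‖Y(h) − V‖_F]`. -/
def gradG (P : Measure Ω) (X : Ω → EuclideanSpace ℝ (Fin d))
    (h : EuclideanSpace ℝ (Fin d)) (V : Mat d) : Mat d :=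
  - ∫ ω, ‖Ymat (X ω) h - V‖⁻¹ • (Ymat (X ω) h - V) ∂P

/-- The Hessian operator
`∇²G_h(V)(A) = E[(1/‖Y(h) − V‖_F)(A − ⟪Y(h) − V, A⟫_F (Y(h) − V)/‖Y(h) − V‖_F²)]`. -/
def hessG (P : Measure Ω) (X : Ω → EuclideanSpace ℝ (Fin d))
    (h : EuclideanSpace ℝ (Fin d)) (V : Mat d) (A : Mat d) : Mat d :=
  ∫ ω, ‖Ymat (X ω) h - V‖⁻¹ •
    (A - (‖Ymat (X ω) h - V‖ ^ 2)⁻¹ • (⟪Ymat (X ω) h - V, A⟫ • (Ymat (X ω) h - V))) ∂P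

section RealAux

lemma aux_term_nonneg (t b : ℝ) (ht : 0 ≤ t) (hb2 : b^2 ≤ t^2) :
    0 ≤ t⁻¹ * (1 - (t^2)⁻¹ * b^2) := by
  rcases eq_or_lt_of_le ht with ht0 | ht0
  · rw [← ht0]; simp
  · have h1 : (t^2)⁻¹ * b^2 ≤ 1 := by
      rw [inv_mul_le_iff₀ (by positivity)]; nlinarith
    have h2 : 0 ≤ (t:ℝ)⁻¹ := by positivity
    nlinarith

lemma aux_term_le (t b : ℝ) (ht : 0 ≤ t) (hb2 : b^2 ≤ t^2) :
    t⁻¹ * (1 - (t^2)⁻¹ * b^2) ≤ t⁻¹ := by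
  rcases eq_or_lt_of_le ht with ht0 | ht0
  · rw [← ht0]; simp
  · have h1 : 0 ≤ (t^2)⁻¹ * b^2 := by positivity
    have h2 : 0 ≤ (t:ℝ)⁻¹ := by positivity
    nlinarith

lemma aux_onesided (s t a b D : ℝ) (hs : 0 ≤ s) (ht : 0 ≤ t) (hD : 0 ≤ D)
    (ha : |a| ≤ s) (hb : |b| ≤ t) (hst : |s - t| ≤ D) (hab : |a - b| ≤ D) :
    s⁻¹ * (1 - (s^2)⁻¹ * a^2) - t⁻¹ * (1 - (t^2)⁻¹ * b^2) ≤ 100 * D * ((s^2)⁻¹ + (t^2)⁻¹) := by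
  have ha2 : a^2 ≤ s^2 := by nlinarith [abs_nonneg a, sq_abs a]
  have hb2 : b^2 ≤ t^2 := by nlinarith [abs_nonneg b, sq_abs b]
  have hpos1 : 0 ≤ (s^2)⁻¹ := by positivity
  have hpos2 : 0 ≤ (t^2)⁻¹ := by positivity
  have h2 := aux_term_nonneg t b ht hb2
  rcases le_or_gt s (2*D) with hcase | hcase
  · have h1 := aux_term_le s a hs ha2
    have h3 : s⁻¹ ≤ 2*D*(s^2)⁻¹ := by
      have e : s⁻¹ = s * (s^2)⁻¹ := by
        rcases eq_or_lt_of_le hs with h | h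
        · rw [← h]; simp
        · field_simp
      rw [e]
      exact mul_le_mul_of_nonneg_right hcase hpos1
    nlinarith
  · have hs0 : 0 < s := by linarith
    have htlb : s - D ≤ t := by cases abs_le.mp hst; linarith
    have htub : t ≤ s + D := by cases abs_le.mp hst; linarith
    have ht0 : 0 < t := by linarith
    have hs2t : s ≤ 2*t := by linarith
    have hab2 : b^2 - a^2 ≤ D * (s + t) := by
      have h4 : |b + a| ≤ t + s := by
        calc |b + a| ≤ |b| + |a| := abs_add_le _ _
        _ ≤ t + s := by linarith
      have h5 : |b - a| ≤ D := by rw [abs_sub_comm]; exact hab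
      calc b^2 - a^2 = (b - a) * (b + a) := by ring
      _ ≤ |(b - a) * (b + a)| := le_abs_self _
      _ = |b - a| * |b + a| := abs_mul _ _
      _ ≤ D * (s + t) := by nlinarith [abs_nonneg (b - a), abs_nonneg (b + a)]
    have hcube : -(D * (s^2 + s*t + t^2)) ≤ t^3 - s^3 := by
      have h := mul_le_mul_of_nonneg_right (show -D ≤ t - s by linarith)
        (show (0:ℝ) ≤ s^2 + s*t + t^2 by positivity)
      have e : (t - s)*(s^2 + s*t + t^2) = t^3 - s^3 := by ring
      linarith
    have hA : -(D * (s^2 + s*t + t^2)) * s^2 ≤ a^2*t^3 - a^2*s^3 := by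
      have p1 := mul_nonneg (sq_nonneg a) (show (0:ℝ) ≤ t^3 - s^3 + D*(s^2+s*t+t^2) by linarith)
      have p2 := mul_nonneg (show (0:ℝ) ≤ D*(s^2+s*t+t^2) by positivity)
        (show (0:ℝ) ≤ s^2 - a^2 by linarith)
      have e : a^2*t^3 - a^2*s^3 - (-(D * (s^2 + s*t + t^2)) * s^2)
          = a^2*(t^3 - s^3 + D*(s^2+s*t+t^2)) + (D*(s^2+s*t+t^2))*(s^2-a^2) := by ring
      linarith
    have hB : b^2*s^3 - a^2*s^3 ≤ D*(s+t)*s^3 := by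
      have h := mul_le_mul_of_nonneg_right hab2 (show (0:ℝ) ≤ s^3 by positivity)
      have e : (b^2 - a^2)*s^3 = b^2*s^3 - a^2*s^3 := by ring
      linarith
    have hC : -(D*s^2*t^2) ≤ s^2*t^2*(s-t) := by
      have h := mul_le_mul_of_nonneg_right (show -D ≤ s - t by linarith)
        (show (0:ℝ) ≤ s^2*t^2 by positivity)
      have e : (s - t)*(s^2*t^2) = s^2*t^2*(s-t) := by ring
      linarith
    have m1 : s^2*t^2 ≤ 2*s*t^3 := by
      have h := mul_le_mul_of_nonneg_right hs2t (show (0:ℝ) ≤ s*t^2 by positivity)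
      have e1 : s*(s*t^2) = s^2*t^2 := by ring
      have e2 : 2*t*(s*t^2) = 2*s*t^3 := by ring
      linarith
    have m2 : s^4 ≤ 2*s^3*t := by
      have h := mul_le_mul_of_nonneg_right hs2t (show (0:ℝ) ≤ s^3 by positivity)
      have e1 : s*(s^3) = s^4 := by ring
      have e2 : 2*t*(s^3) = 2*s^3*t := by ring
      linarith
    have hM : 0 ≤ 100*(s*t^3 + s^3*t) - s^2*t^2 - s^2*(s^2+s*t+t^2) - (s+t)*s^3 := by
      have p1 : 0 ≤ s*t^3 := by positivity
      have p2 : 0 ≤ s^3*t := by positivity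
      have e : 100*(s*t^3 + s^3*t) - s^2*t^2 - s^2*(s^2+s*t+t^2) - (s+t)*s^3
          = 100*(s*t^3) + 98*(s^3*t) - 2*(s^2*t^2) - 2*(s^4) := by ring
      linarith
    have hDM : 0 ≤ D * (100*(s*t^3 + s^3*t) - s^2*t^2 - s^2*(s^2+s*t+t^2) - (s+t)*s^3) :=
      mul_nonneg hD hM
    have hN : 0 ≤ 100*D*(s*t^3 + s^3*t) - s^2*t^3 + a^2*t^3 + s^3*t^2 - b^2*s^3 := by
      have e : 100*D*(s*t^3 + s^3*t) - s^2*t^3 + a^2*t^3 + s^3*t^2 - b^2*s^3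
          - D * (100*(s*t^3 + s^3*t) - s^2*t^2 - s^2*(s^2+s*t+t^2) - (s+t)*s^3)
          = (s^2*t^2*(s-t) - (-(D*s^2*t^2)))
            + ((a^2*t^3 - a^2*s^3) - (-(D * (s^2 + s*t + t^2)) * s^2))
            + ((D*(s+t)*s^3) - (b^2*s^3 - a^2*s^3)) := by ring
      linarith
    have key : 100 * D * ((s^2)⁻¹ + (t^2)⁻¹) - (s⁻¹ * (1 - (s^2)⁻¹ * a^2) - t⁻¹ * (1 - (t^2)⁻¹ * b^2))
        = (100*D*(s*t^3 + s^3*t) - s^2*t^3 + a^2*t^3 + s^3*t^2 - b^2*s^3) / (s^3 * t^3) := by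
      field_simp
      ring
    have hfin : 0 ≤ (100*D*(s*t^3 + s^3*t) - s^2*t^3 + a^2*t^3 + s^3*t^2 - b^2*s^3) / (s^3 * t^3) :=
      div_nonneg hN (by positivity)
    linarith

end RealAux

section PureInner
variable {E : Type*} [NormedAddCommGroup E] [InnerProductSpace ℝ E]

/-- The integrand of the Hessian operator. -/
def Ival (u A : E) : E := ‖u‖⁻¹ • (A - (‖u‖ ^ 2)⁻¹ • (⟪u, A⟫ • u))

/-- The integrand of the Hessian quadratic form. -/
def qval (u A : E) : ℝ := ‖u‖⁻¹ * (‖A‖ ^ 2 - (‖u‖ ^ 2)⁻¹ * ⟪u, A⟫ ^ 2)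

lemma inner_Ival (u A B : E) :
    ⟪Ival u A, B⟫ = ‖u‖⁻¹ * (⟪A, B⟫ - (‖u‖ ^ 2)⁻¹ * (⟪u, A⟫ * ⟪u, B⟫)) := by
  simp [Ival, inner_sub_left, real_inner_smul_left]

lemma inner_Ival_symm (u A B : E) : ⟪Ival u A, B⟫ = ⟪A, Ival u B⟫ := by
  rw [real_inner_comm (Ival u B) A, inner_Ival, inner_Ival]
  rw [real_inner_comm B A]
  ring

lemma inner_Ival_self (u A : E) : ⟪Ival u A, A⟫ = qval u A := by
  rw [inner_Ival, qval, real_inner_self_eq_norm_sq]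
  ring

lemma qval_nonneg (u A : E) : 0 ≤ qval u A := by
  rcases eq_or_ne u 0 with h | h
  · simp [qval, h]
  · have h1 : ⟪u, A⟫ ^ 2 ≤ ‖u‖ ^ 2 * ‖A‖ ^ 2 := by
      have := abs_real_inner_le_norm u A
      nlinarith [abs_nonneg ⟪u, A⟫, sq_abs ⟪u, A⟫]
    have h2 : (0:ℝ) < ‖u‖ := norm_pos_iff.mpr h
    have h3 : (‖u‖ ^ 2)⁻¹ * ⟪u, A⟫ ^ 2 ≤ ‖A‖ ^ 2 := by
      rw [inv_mul_le_iff₀ (by positivity)]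
      linarith
    have h4 : 0 ≤ ‖u‖⁻¹ := by positivity
    unfold qval
    nlinarith

lemma qval_le (u A : E) : qval u A ≤ ‖u‖⁻¹ * ‖A‖ ^ 2 := by
  unfold qval
  have h4 : 0 ≤ ‖u‖⁻¹ := by positivity
  have h5 : 0 ≤ (‖u‖ ^ 2)⁻¹ * ⟪u, A⟫ ^ 2 := by positivity
  nlinarith

lemma norm_Ival_le (u A : E) : ‖Ival u A‖ ≤ ‖u‖⁻¹ * ‖A‖ := by
  unfold Ival
  rw [norm_smul, norm_inv, norm_norm]
  apply mul_le_mul_of_nonneg_left _ (by positivity)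
  rcases eq_or_ne u 0 with h | h
  · simp [h]
  · have h2 : (0:ℝ) < ‖u‖ := norm_pos_iff.mpr h
    have key : ‖A - (‖u‖ ^ 2)⁻¹ • (⟪u, A⟫ • u)‖ ^ 2 ≤ ‖A‖ ^ 2 := by
      rw [smul_smul, norm_sub_sq_real, real_inner_smul_right, norm_smul, mul_pow,
        Real.norm_eq_abs, sq_abs]
      have e1 : ⟪A, u⟫ = ⟪u, A⟫ := real_inner_comm _ _
      rw [e1]
      have hu2 : (‖u‖:ℝ) ^ 2 ≠ 0 := by positivity
      have e3 : ((‖u‖ ^ 2)⁻¹ * ⟪u, A⟫) ^ 2 * ‖u‖ ^ 2 = (‖u‖ ^ 2)⁻¹ * ⟪u, A⟫ ^ 2 := by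
        field_simp
      have e4 : 2 * ((‖u‖ ^ 2)⁻¹ * ⟪u, A⟫ * ⟪u, A⟫) = 2 * ((‖u‖ ^ 2)⁻¹ * ⟪u, A⟫ ^ 2) := by ring
      rw [e3, e4]
      have h5 : 0 ≤ (‖u‖ ^ 2)⁻¹ * ⟪u, A⟫ ^ 2 := by positivity
      linarith
    nlinarith [norm_nonneg (A - (‖u‖ ^ 2)⁻¹ • (⟪u, A⟫ • u)), norm_nonneg A]

lemma Ival_add (u A B : E) : Ival u (A + B) = Ival u A + Ival u B := by
  unfold Ival
  rw [inner_add_right, add_smul, smul_add, add_sub_add_comm, smul_add]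

lemma Ival_smul (u : E) (c : ℝ) (A : E) : Ival u (c • A) = c • Ival u A := by
  unfold Ival
  have e : (‖u‖ ^ 2)⁻¹ • ((c * ⟪u, A⟫) • u) = c • ((‖u‖ ^ 2)⁻¹ • (⟪u, A⟫ • u)) := by
    rw [mul_smul, smul_comm]
  rw [inner_smul_right, e, ← smul_sub, smul_comm]

lemma qval_smul (u : E) (c : ℝ) (A : E) : qval u (c • A) = c ^ 2 * qval u A := by
  simp only [qval, inner_smul_right, norm_smul, mul_pow, Real.norm_eq_abs, sq_abs]
  ring

lemma qval_eq_zero_parallel {u A : E} (hA : A ≠ 0) (h : qval u A = 0) :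
    ∃ r : ℝ, u = r • A := by
  rcases eq_or_ne u 0 with h0 | h0
  · exact ⟨0, by simp [h0]⟩
  · have h2 : (0:ℝ) < ‖u‖ := norm_pos_iff.mpr h0
    have h3 : ‖A‖ ^ 2 - (‖u‖ ^ 2)⁻¹ * ⟪u, A⟫ ^ 2 = 0 := by
      unfold qval at h
      rcases mul_eq_zero.mp h with h' | h'
      · exact absurd h' (by positivity)
      · exact h'
    have h4 : ⟪u, A⟫ ^ 2 = (‖u‖ * ‖A‖) ^ 2 := by
      have : (‖u‖:ℝ)^2 ≠ 0 := by positivity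
      field_simp at h3
      nlinarith [h3]
    have h5 : |⟪u, A⟫| = ‖u‖ * ‖A‖ := by
      have := abs_nonneg ⟪u, A⟫
      nlinarith [sq_abs ⟪u, A⟫, mul_nonneg (norm_nonneg u) (norm_nonneg A)]
    rw [← Real.norm_eq_abs, norm_inner_eq_norm_iff h0 hA] at h5
    obtain ⟨r, hr, hA'⟩ := h5
    exact ⟨r⁻¹, by rw [hA', smul_smul, inv_mul_cancel₀ hr, one_smul]⟩

lemma qval_lip (u v A : E) (hA : ‖A‖ = 1) :
    |qval u A - qval v A| ≤ 100 * ‖u - v‖ * ((‖u‖ ^ 2)⁻¹ + (‖v‖ ^ 2)⁻¹) := by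
  have h1 : |⟪u, A⟫| ≤ ‖u‖ := by
    have := abs_real_inner_le_norm u A; rw [hA] at this; simpa using this
  have h2 : |⟪v, A⟫| ≤ ‖v‖ := by
    have := abs_real_inner_le_norm v A; rw [hA] at this; simpa using this
  have h3 : |‖u‖ - ‖v‖| ≤ ‖u - v‖ := abs_norm_sub_norm_le u v
  have h4 : |⟪u, A⟫ - ⟪v, A⟫| ≤ ‖u - v‖ := by
    rw [← inner_sub_left]
    have := abs_real_inner_le_norm (u - v) A; rw [hA] at this; simpa using this
  have e : ∀ w : E, qval w A = ‖w‖⁻¹ * (1 - (‖w‖ ^ 2)⁻¹ * ⟪w, A⟫ ^ 2) := by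
    intro w; rw [qval, hA]; ring_nf
  rw [e u, e v]
  rw [abs_sub_le_iff]
  constructor
  · exact aux_onesided _ _ _ _ _ (norm_nonneg u) (norm_nonneg v) (norm_nonneg _) h1 h2 h3 h4
  · have := aux_onesided ‖v‖ ‖u‖ ⟪v, A⟫ ⟪u, A⟫ ‖u - v‖ (norm_nonneg v) (norm_nonneg u)
      (norm_nonneg _) h2 h1 (by rw [abs_sub_comm]; exact h3) (by rw [abs_sub_comm]; exact h4)
    linarith

end PureInner

section MeasureLayer

lemma continuous_Ymat (h : EuclideanSpace ℝ (Fin d)) :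
    Continuous (fun x : EuclideanSpace ℝ (Fin d) => Ymat x h) := by
  apply (PiLp.continuous_toLp 2 (fun _ : Fin d × Fin d => ℝ)).comp
  apply continuous_pi
  intro p
  exact (((continuous_apply p.1).comp (PiLp.continuous_ofLp 2 (fun _ : Fin d => ℝ))).sub
      continuous_const).mul
    (((continuous_apply p.2).comp (PiLp.continuous_ofLp 2 (fun _ : Fin d => ℝ))).sub
      continuous_const)

lemma measurable_U {X : Ω → EuclideanSpace ℝ (Fin d)} (hX : Measurable X)
    (h : EuclideanSpace ℝ (Fin d)) (V : Mat d) :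
    Measurable (fun ω => Ymat (X ω) h - V) :=
  (((continuous_Ymat h).measurable).comp hX).sub measurable_const

lemma measurable_Ival {X : Ω → EuclideanSpace ℝ (Fin d)} (hX : Measurable X)
    (h : EuclideanSpace ℝ (Fin d)) (V : Mat d) (A : Mat d) :
    Measurable (fun ω => Ival (Ymat (X ω) h - V) A) := by
  have hU := measurable_U hX h V
  unfold Ival
  exact (hU.norm.inv).smul (measurable_const.sub
    (((hU.norm.pow_const 2).inv).smul (Measurable.smul (hU.inner measurable_const : Measurable fun ω => ⟪Ymat (X ω) h - V, A⟫) hU)))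

lemma measurable_qval {X : Ω → EuclideanSpace ℝ (Fin d)} (hX : Measurable X)
    (h : EuclideanSpace ℝ (Fin d)) (V : Mat d) (A : Mat d) :
    Measurable (fun ω => qval (Ymat (X ω) h - V) A) := by
  have hU := measurable_U hX h V
  unfold qval
  exact (hU.norm.inv).mul (measurable_const.sub
    (((hU.norm.pow_const 2).inv).mul ((hU.inner measurable_const).pow_const 2)))

lemma aux_integrable_bound (P : Measure Ω) {f : Ω → ℝ} (hf : Measurable f)
    (h0 : ∀ ω, 0 ≤ f ω) {B : ℝ} (hB : 0 ≤ B)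
    (h : ∫⁻ ω, ENNReal.ofReal (f ω) ∂P ≤ ENNReal.ofReal B) :
    Integrable f P ∧ ∫ ω, f ω ∂P ≤ B := by
  have hfi : Integrable f P := by
    refine ⟨hf.aestronglyMeasurable, ?_⟩
    rw [HasFiniteIntegral]
    calc ∫⁻ ω, ‖f ω‖₊ ∂P = ∫⁻ ω, ENNReal.ofReal (f ω) ∂P := by
          apply lintegral_congr; intro ω
          exact Real.enorm_eq_ofReal (h0 ω)
      _ ≤ ENNReal.ofReal B := h
      _ < ⊤ := ENNReal.ofReal_lt_top
  refine ⟨hfi, ?_⟩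
  rw [integral_eq_lintegral_of_nonneg_ae (ae_of_all _ h0) hf.aestronglyMeasurable]
  calc (∫⁻ ω, ENNReal.ofReal (f ω) ∂P).toReal ≤ (ENNReal.ofReal B).toReal :=
        ENNReal.toReal_mono ENNReal.ofReal_ne_top h
    _ = B := ENNReal.toReal_ofReal hB

lemma ofReal_norm_inv_le {E : Type*} [NormedAddCommGroup E] (u : E) :
    ENNReal.ofReal (‖u‖⁻¹) ≤ (‖u‖₊ : ℝ≥0∞)⁻¹ := by
  rcases eq_or_ne ‖u‖ 0 with h | h
  · simp [h]
  · have h0 : 0 < ‖u‖ := lt_of_le_of_ne (norm_nonneg u) (Ne.symm h)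
    rw [ENNReal.ofReal_inv_of_pos h0, ofReal_norm]; rfl

lemma ofReal_norm_inv_sq_le {E : Type*} [NormedAddCommGroup E] (u : E) :
    ENNReal.ofReal ((‖u‖ ^ 2)⁻¹) ≤ ((‖u‖₊ : ℝ≥0∞) ^ 2)⁻¹ := by
  rcases eq_or_ne ‖u‖ 0 with h | h
  · simp [h]
  · have h0 : 0 < ‖u‖ ^ 2 := by positivity
    rw [ENNReal.ofReal_inv_of_pos h0, ENNReal.ofReal_pow (norm_nonneg u),
      ofReal_norm]; rfl

section WithP
variable (P : Measure Ω) {X : Ω → EuclideanSpace ℝ (Fin d)} (hX : Measurable X)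
  {C : ℝ} (hC : 0 < C)
  (hA3 : ∀ (h : EuclideanSpace ℝ (Fin d)) (V : Mat d),
      (∫⁻ ω, (‖Ymat (X ω) h - V‖₊ : ℝ≥0∞)⁻¹ ∂P) ≤ ENNReal.ofReal C ∧
      (∫⁻ ω, ((‖Ymat (X ω) h - V‖₊ : ℝ≥0∞) ^ 2)⁻¹ ∂P) ≤ ENNReal.ofReal C)

include hX hC hA3

lemma integrable_inv (h : EuclideanSpace ℝ (Fin d)) (V : Mat d) :
    Integrable (fun ω => ‖Ymat (X ω) h - V‖⁻¹) P ∧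
      ∫ ω, ‖Ymat (X ω) h - V‖⁻¹ ∂P ≤ C := by
  apply aux_integrable_bound P ((measurable_U hX h V).norm.inv)
    (fun ω => inv_nonneg.mpr (norm_nonneg _)) hC.le
  calc ∫⁻ ω, ENNReal.ofReal (‖Ymat (X ω) h - V‖⁻¹) ∂P
      ≤ ∫⁻ ω, (‖Ymat (X ω) h - V‖₊ : ℝ≥0∞)⁻¹ ∂P :=
        lintegral_mono fun ω => ofReal_norm_inv_le _
    _ ≤ ENNReal.ofReal C := (hA3 h V).1

lemma integrable_inv_sq (h : EuclideanSpace ℝ (Fin d)) (V : Mat d) :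
    Integrable (fun ω => (‖Ymat (X ω) h - V‖ ^ 2)⁻¹) P ∧
      ∫ ω, (‖Ymat (X ω) h - V‖ ^ 2)⁻¹ ∂P ≤ C := by
  apply aux_integrable_bound P (((measurable_U hX h V).norm.pow_const 2).inv)
    (fun ω => inv_nonneg.mpr (pow_nonneg (norm_nonneg _) 2)) hC.le
  calc ∫⁻ ω, ENNReal.ofReal ((‖Ymat (X ω) h - V‖ ^ 2)⁻¹) ∂P
      ≤ ∫⁻ ω, ((‖Ymat (X ω) h - V‖₊ : ℝ≥0∞) ^ 2)⁻¹ ∂P :=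
        lintegral_mono fun ω => ofReal_norm_inv_sq_le _
    _ ≤ ENNReal.ofReal C := (hA3 h V).2

lemma integrable_Ival (h : EuclideanSpace ℝ (Fin d)) (V : Mat d) (A : Mat d) :
    Integrable (fun ω => Ival (Ymat (X ω) h - V) A) P := by
  apply Integrable.mono' (((integrable_inv P hX hC hA3 h V).1).mul_const ‖A‖)
    (measurable_Ival hX h V A).aestronglyMeasurable
  exact ae_of_all _ fun ω => norm_Ival_le _ _

lemma integrable_qval (h : EuclideanSpace ℝ (Fin d)) (V : Mat d) (A : Mat d) :
    Integrable (fun ω => qval (Ymat (X ω) h - V) A) P := by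
  apply Integrable.mono' (((integrable_inv P hX hC hA3 h V).1).mul_const (‖A‖ ^ 2))
    (measurable_qval hX h V A).aestronglyMeasurable
  refine ae_of_all _ fun ω => ?_
  rw [Real.norm_eq_abs, abs_of_nonneg (qval_nonneg _ _)]
  exact qval_le _ _

omit hX hC hA3 in
lemma hessG_eq (h : EuclideanSpace ℝ (Fin d)) (V : Mat d) (A : Mat d) :
    hessG P X h V A = ∫ ω, Ival (Ymat (X ω) h - V) A ∂P := rfl

lemma inner_hessG (h : EuclideanSpace ℝ (Fin d)) (V : Mat d) (A B : Mat d) :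
    ⟪hessG P X h V A, B⟫ = ∫ ω, ⟪Ival (Ymat (X ω) h - V) A, B⟫ ∂P := by
  rw [hessG_eq, real_inner_comm, ← integral_inner (integrable_Ival P hX hC hA3 h V A)]
  exact integral_congr_ae (Eventually.of_forall (fun ω => real_inner_comm _ _))

lemma inner_hessG_self (h : EuclideanSpace ℝ (Fin d)) (V : Mat d) (A : Mat d) :
    ⟪hessG P X h V A, A⟫ = ∫ ω, qval (Ymat (X ω) h - V) A ∂P := by
  rw [inner_hessG P hX hC hA3]
  exact integral_congr_ae (Eventually.of_forall (fun ω => inner_Ival_self _ _))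

lemma hessG_add (h : EuclideanSpace ℝ (Fin d)) (V : Mat d) (A B : Mat d) :
    hessG P X h V (A + B) = hessG P X h V A + hessG P X h V B := by
  rw [hessG_eq, hessG_eq, hessG_eq,
    ← integral_add (integrable_Ival P hX hC hA3 h V A) (integrable_Ival P hX hC hA3 h V B)]
  exact integral_congr_ae (Eventually.of_forall (fun ω => Ival_add _ _ _))

lemma hessG_smul (h : EuclideanSpace ℝ (Fin d)) (V : Mat d) (c : ℝ) (A : Mat d) :
    hessG P X h V (c • A) = c • hessG P X h V A := by
  rw [hessG_eq, hessG_eq, ← integral_smul]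
  exact integral_congr_ae (Eventually.of_forall (fun ω => Ival_smul _ _ _))

omit hX hC hA3 in
lemma hessG_zero (h : EuclideanSpace ℝ (Fin d)) (V : Mat d) :
    hessG P X h V (0 : Mat d) = 0 := by
  have e : ∀ u : Mat d, Ival u (0 : Mat d) = 0 := fun u => by simp [Ival]
  rw [hessG_eq]
  simp only [e, integral_zero]

lemma Q_scale (h : EuclideanSpace ℝ (Fin d)) (V : Mat d) (c : ℝ) (A : Mat d) :
    ⟪hessG P X h V (c • A), c • A⟫ = c ^ 2 * ⟪hessG P X h V A, A⟫ := by
  rw [inner_hessG_self P hX hC hA3, inner_hessG_self P hX hC hA3, ← integral_const_mul]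
  exact integral_congr_ae (Eventually.of_forall (fun ω => qval_smul _ _ _))

lemma unit_to_all (h : EuclideanSpace ℝ (Fin d)) (V : Mat d) (c0 : ℝ)
    (hu : ∀ A : Mat d, ‖A‖ = 1 → c0 ≤ ⟪hessG P X h V A, A⟫) :
    ∀ A : Mat d, c0 * ‖A‖ ^ 2 ≤ ⟪hessG P X h V A, A⟫ := by
  intro A
  rcases eq_or_ne A 0 with rfl | hA0
  · simp
  · have hnA : ‖A‖ ≠ 0 := norm_ne_zero_iff.mpr hA0
    have h1 : ‖(‖A‖⁻¹ • A)‖ = 1 := by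
      rw [norm_smul, norm_inv, norm_norm, inv_mul_cancel₀ hnA]
    have h2 := hu _ h1
    rw [Q_scale P hX hC hA3] at h2
    have hpos : (0:ℝ) < ‖A‖ ^ 2 := by positivity
    have h4 := mul_le_mul_of_nonneg_right h2 hpos.le
    have e : (‖A‖⁻¹) ^ 2 * ⟪hessG P X h V A, A⟫ * ‖A‖ ^ 2 = ⟪hessG P X h V A, A⟫ := by
      field_simp
    linarith

lemma not_ae_parallel [IsProbabilityMeasure P]
    (m : EuclideanSpace ℝ (Fin d)) (Γ A : Mat d) (hA : ‖A‖ = 1) :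
    ¬ (∀ᵐ ω ∂P, ∃ r : ℝ, Ymat (X ω) m - Γ = r • A) := by
  intro hpar
  set lam : Ω → ℝ := fun ω => ⟪Ymat (X ω) m - Γ, A⟫ with hlam
  have step1 : ∀ (c r : ℝ), 0 < r →
      P {ω | |lam ω - c| ≤ r} ≤ ENNReal.ofReal C * ENNReal.ofReal (r ^ 2) := by
    intro c r hr
    set V : Mat d := Γ + c • A with hV
    set f : Ω → ℝ≥0∞ := fun ω => ((‖Ymat (X ω) m - V‖₊ : ℝ≥0∞) ^ 2)⁻¹ with hf
    have hfm : Measurable f := ((measurable_U hX m V).enorm.pow_const 2).inv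
    have hae : {ω | |lam ω - c| ≤ r} ≤ᵐ[P] {ω | (ENNReal.ofReal (r ^ 2))⁻¹ ≤ f ω} := by
      filter_upwards [hpar] with ω hω hmem
      obtain ⟨s, hs⟩ := hω
      have hlamω : lam ω = s := by
        rw [hlam]; simp only; rw [hs, real_inner_smul_left, real_inner_self_eq_norm_sq, hA]
        ring
      have hnorm : ‖Ymat (X ω) m - V‖ = |lam ω - c| := by
        have e : Ymat (X ω) m - V = (s - c) • A := by
          rw [hV, sub_smul]
          rw [← hs]
          abel
        rw [e, norm_smul, hA, mul_one, Real.norm_eq_abs, hlamω]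
      have h1 : (‖Ymat (X ω) m - V‖₊ : ℝ≥0∞) ^ 2 ≤ ENNReal.ofReal (r ^ 2) := by
        rw [show (‖Ymat (X ω) m - V‖₊ : ℝ≥0∞) = ENNReal.ofReal ‖Ymat (X ω) m - V‖ from (ofReal_norm _).symm, ← ENNReal.ofReal_pow (norm_nonneg _)]
        apply ENNReal.ofReal_le_ofReal
        rw [hnorm]
        have hmem' : |lam ω - c| ≤ r := hmem
        have := abs_nonneg (lam ω - c)
        nlinarith
      exact ENNReal.inv_le_inv' h1
    have hmarkov := meas_ge_le_lintegral_div (μ := P) hfm.aemeasurable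
      (ε := (ENNReal.ofReal (r ^ 2))⁻¹)
      (by simp [ENNReal.ofReal_ne_top]) (by simp [ENNReal.ofReal_eq_zero]; nlinarith)
    calc P {ω | |lam ω - c| ≤ r} ≤ P {ω | (ENNReal.ofReal (r ^ 2))⁻¹ ≤ f ω} :=
          measure_mono_ae hae
      _ ≤ (∫⁻ ω, f ω ∂P) / (ENNReal.ofReal (r ^ 2))⁻¹ := hmarkov
      _ ≤ ENNReal.ofReal C * ENNReal.ofReal (r ^ 2) := by
          rw [div_eq_mul_inv, inv_inv]
          exact mul_le_mul_left (hA3 m V).2 _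
  have step2 : ∀ n : ℕ, P {ω | |lam ω| ≤ (n : ℝ)} = 0 := by
    intro n
    have key : ∀ k : ℕ, P {ω | |lam ω| ≤ (n : ℝ)} ≤
        ENNReal.ofReal (C * (2 * n + 1) / (k + 1)) := by
      intro k
      set r : ℝ := 1 / (k + 1) with hrdef
      have hr : 0 < r := by positivity
      set M : ℕ := 2 * n * (k + 1) + 1 with hM
      have hcover : {ω | |lam ω| ≤ (n : ℝ)} ⊆
          ⋃ i ∈ Finset.range M, {ω | |lam ω - (-(n : ℝ) + i * r)| ≤ r} := by
        intro ω hω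
        have hω' : |lam ω| ≤ (n : ℝ) := hω
        have h1 : 0 ≤ lam ω + n := by cases abs_le.mp hω'; linarith
        have h2 : lam ω ≤ n := by cases abs_le.mp hω'; linarith
        set i : ℕ := ⌊(lam ω + n) * (k + 1)⌋₊ with hi
        have hik : (i : ℝ) ≤ (lam ω + n) * (k + 1) := Nat.floor_le (by positivity)
        have hik2 : (lam ω + n) * (k + 1) < i + 1 := Nat.lt_floor_add_one _
        have hiM : i < M := by
          have h3 : (i : ℝ) ≤ 2 * n * (k + 1) := by
            calc (i:ℝ) ≤ (lam ω + n) * (k + 1) := hik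
            _ ≤ (2 * n) * (k + 1) := by
                have hk1 : (0:ℝ) < k + 1 := by positivity
                nlinarith
          have h4 : (i : ℝ) < M := by rw [hM]; push_cast; linarith
          exact_mod_cast h4
        refine Set.mem_biUnion (Finset.mem_range.mpr hiM) ?_
        show |lam ω - (-(n : ℝ) + i * r)| ≤ r
        have hk1 : (0:ℝ) < (k:ℝ) + 1 := by positivity
        have hrk : r * ((k:ℝ) + 1) = 1 := by rw [hrdef]; field_simp
        rw [abs_le]
        constructor
        · have h5 : (i:ℝ) * r ≤ lam ω + n := by
            have h6 := mul_le_mul_of_nonneg_right hik (le_of_lt hr)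
            calc (i:ℝ) * r ≤ (lam ω + n) * (k + 1) * r := h6
            _ = (lam ω + n) * (r * (k + 1)) := by ring
            _ = lam ω + n := by rw [hrk]; ring
          linarith
        · have h5 : lam ω + n < ((i:ℝ) + 1) * r := by
            have h6 := mul_lt_mul_of_pos_right hik2 hr
            calc lam ω + n = (lam ω + n) * (r * (k+1)) := by rw [hrk]; ring
            _ = (lam ω + n) * (k + 1) * r := by ring
            _ < ((i:ℝ) + 1) * r := h6
          linarith
      have hsum : P {ω | |lam ω| ≤ (n : ℝ)} ≤
          (M : ℝ≥0∞) * (ENNReal.ofReal C * ENNReal.ofReal (r ^ 2)) := by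
        calc P {ω | |lam ω| ≤ (n : ℝ)}
            ≤ P (⋃ i ∈ Finset.range M, {ω | |lam ω - (-(n : ℝ) + i * r)| ≤ r}) :=
              measure_mono hcover
          _ ≤ ∑ i ∈ Finset.range M, P {ω | |lam ω - (-(n : ℝ) + i * r)| ≤ r} :=
              measure_biUnion_finset_le _ _
          _ ≤ ∑ _i ∈ Finset.range M, (ENNReal.ofReal C * ENNReal.ofReal (r ^ 2)) :=
              Finset.sum_le_sum (fun i _ => step1 _ r hr)
          _ = (M : ℝ≥0∞) * (ENNReal.ofReal C * ENNReal.ofReal (r ^ 2)) := by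
              rw [Finset.sum_const, Finset.card_range, nsmul_eq_mul]
      refine hsum.trans ?_
      have e : (M : ℝ≥0∞) * (ENNReal.ofReal C * ENNReal.ofReal (r ^ 2))
          = ENNReal.ofReal (M * (C * r ^ 2)) := by
        rw [ENNReal.ofReal_mul (by positivity), ENNReal.ofReal_mul hC.le,
          ENNReal.ofReal_natCast]
      rw [e]
      apply ENNReal.ofReal_le_ofReal
      have hk1 : (0:ℝ) < (k:ℝ) + 1 := by positivity
      have hMle : (M:ℝ) ≤ (2*n+1) * (k+1) := by
        rw [hM]; push_cast; nlinarith [Nat.cast_nonneg (α := ℝ) n, hk1]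
      have hr2 : r ^ 2 = 1 / ((k+1)^2) := by rw [hrdef]; field_simp
      rw [hr2, div_eq_mul_inv, div_eq_mul_inv]
      have expand : C * (2 * (n:ℝ) + 1) * ((k:ℝ)+1)⁻¹
          = ((2*(n:ℝ)+1) * ((k:ℝ)+1)) * (C * (1 * (((k:ℝ)+1)^2)⁻¹)) := by
        field_simp
      rw [expand]
      apply mul_le_mul_of_nonneg_right hMle
      positivity
    have htend : Tendsto (fun k : ℕ => ENNReal.ofReal (C * (2 * n + 1) / (k + 1)))
        atTop (nhds 0) := by
      rw [show (0:ℝ≥0∞) = ENNReal.ofReal 0 by simp]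
      apply ENNReal.tendsto_ofReal
      have := (tendsto_const_div_atTop_nhds_zero_nat (C * (2 * n + 1))).comp
        (tendsto_add_atTop_nat 1)
      apply this.congr
      intro a
      simp [Function.comp]
    have := le_of_tendsto_of_tendsto' (tendsto_const_nhds
      (x := P {ω | |lam ω| ≤ (n : ℝ)}) (f := atTop)) htend key
    simpa using this
  have hunion : (⋃ n : ℕ, {ω | |lam ω| ≤ (n : ℝ)}) = Set.univ := by
    ext ω
    simp only [Set.mem_iUnion, Set.mem_setOf_eq, Set.mem_univ, iff_true]
    obtain ⟨n, hn⟩ := exists_nat_ge |lam ω|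
    exact ⟨n, hn⟩
  have hPuniv : P Set.univ = 0 := by
    rw [← hunion]
    exact measure_iUnion_null step2
  rw [measure_univ] at hPuniv
  exact one_ne_zero hPuniv

lemma Q_pos [IsProbabilityMeasure P]
    (m : EuclideanSpace ℝ (Fin d)) (Γ : Mat d) (A : Mat d) (hA : ‖A‖ = 1) :
    0 < ⟪hessG P X m Γ A, A⟫ := by
  rw [inner_hessG_self P hX hC hA3]
  have hnn : 0 ≤ ∫ ω, qval (Ymat (X ω) m - Γ) A ∂P :=
    integral_nonneg (fun ω => qval_nonneg _ _)
  rcases eq_or_lt_of_le hnn with heq | h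
  · exfalso
    have hzero : (fun ω => qval (Ymat (X ω) m - Γ) A) =ᵐ[P] 0 :=
      (integral_eq_zero_iff_of_nonneg (fun ω => qval_nonneg _ _)
        (integrable_qval P hX hC hA3 m Γ A)).mp heq.symm
    apply not_ae_parallel P hX hC hA3 m Γ A hA
    filter_upwards [hzero] with ω hω
    exact qval_eq_zero_parallel (by intro h0; rw [h0] at hA; simp at hA) hω
  · exact h

end WithP
end MeasureLayer

section Outer

def outerM {d : ℕ} (a b : EuclideanSpace ℝ (Fin d)) : Mat d :=
  (WithLp.equiv 2 _).symm (fun p => a p.1 * b p.2)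

lemma outerM_apply {d : ℕ} (a b : EuclideanSpace ℝ (Fin d)) (p : Fin d × Fin d) :
    outerM a b p = a p.1 * b p.2 := rfl

lemma norm_outerM {d : ℕ} (a b : EuclideanSpace ℝ (Fin d)) :
    ‖outerM a b‖ = ‖a‖ * ‖b‖ := by
  rw [EuclideanSpace.norm_eq, EuclideanSpace.norm_eq, EuclideanSpace.norm_eq]
  rw [← Real.sqrt_mul (by positivity)]
  congr 1
  rw [Finset.sum_mul_sum, ← Fintype.sum_prod_type']
  apply Finset.sum_congr rfl
  intro p _
  rw [outerM_apply]
  simp [Real.norm_eq_abs, abs_mul, mul_pow]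

lemma Ymat_sub_Ymat {d : ℕ} (x h m : EuclideanSpace ℝ (Fin d)) :
    Ymat x h - Ymat x m = outerM (m - h) (x - h) + outerM (x - m) (m - h) := by
  apply PiLp.ext
  intro p
  have e1 : (Ymat x h - Ymat x m) p = Ymat x h p - Ymat x m p := rfl
  have e2 : (outerM (m - h) (x - h) + outerM (x - m) (m - h)) p
      = outerM (m - h) (x - h) p + outerM (x - m) (m - h) p := rfl
  rw [e1, e2, outerM_apply, outerM_apply]
  show (x p.1 - h p.1) * (x p.2 - h p.2) - (x p.1 - m p.1) * (x p.2 - m p.2)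
      = (m - h) p.1 * (x - h) p.2 + (x - m) p.1 * (m - h) p.2
  have s1 : (m - h) p.1 = m p.1 - h p.1 := rfl
  have s2 : (x - h) p.2 = x p.2 - h p.2 := rfl
  have s3 : (x - m) p.1 = x p.1 - m p.1 := rfl
  have s4 : (m - h) p.2 = m p.2 - h p.2 := rfl
  rw [s1, s2, s3, s4]
  ring

lemma norm_Ymat_sub_Ymat_le {d : ℕ} (x h m : EuclideanSpace ℝ (Fin d)) :
    ‖Ymat x h - Ymat x m‖ ≤ ‖h - m‖ * (‖x - h‖ + ‖x - m‖) := by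
  rw [Ymat_sub_Ymat]
  calc ‖outerM (m - h) (x - h) + outerM (x - m) (m - h)‖
      ≤ ‖outerM (m - h) (x - h)‖ + ‖outerM (x - m) (m - h)‖ := norm_add_le _ _
    _ = ‖m - h‖ * ‖x - h‖ + ‖x - m‖ * ‖m - h‖ := by rw [norm_outerM, norm_outerM]
    _ = ‖h - m‖ * (‖x - h‖ + ‖x - m‖) := by rw [norm_sub_rev m h]; ring

end Outer

lemma tail_tendsto (P : Measure Ω) [IsProbabilityMeasure P]
    {g : Ω → ℝ} (hg : Measurable g) (h0 : ∀ ω, 0 ≤ g ω) (hgi : Integrable g P)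
    {W : Ω → ℝ} (hW : Measurable W) :
    Tendsto (fun n : ℕ => ∫ ω in {ω | (n : ℝ) < W ω}, g ω ∂P) atTop (nhds 0) := by
  have hSm : ∀ n : ℕ, MeasurableSet {ω | (n : ℝ) < W ω} :=
    fun n => measurableSet_lt measurable_const hW
  have key : Tendsto (fun n : ℕ => ∫ ω, Set.indicator {ω | (n : ℝ) < W ω} g ω ∂P)
      atTop (nhds (∫ ω, (0:ℝ) ∂P)) := by
    apply tendsto_integral_of_dominated_convergence g
    · intro n
      exact (hg.indicator (hSm n)).aestronglyMeasurable
    · exact hgi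
    · intro n
      refine Eventually.of_forall fun ω => ?_
      rw [Real.norm_eq_abs]
      rcases Set.indicator_eq_zero_or_self {ω | (n : ℝ) < W ω} g ω with h | h
      · rw [h]; simp [h0 ω]
      · rw [h, abs_of_nonneg (h0 ω)]
    · refine Eventually.of_forall fun ω => ?_
      apply tendsto_atTop_of_eventually_const (i₀ := ⌈W ω⌉₊)
      intro n hn
      apply Set.indicator_of_notMem
      simp only [Set.mem_setOf_eq, not_lt]
      calc W ω ≤ (⌈W ω⌉₊ : ℝ) := Nat.le_ceil _
        _ ≤ (n : ℝ) := by exact_mod_cast hn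
  simp only [integral_zero] at key
  apply key.congr
  intro n
  rw [integral_indicator (hSm n)]

set_option maxHeartbeats 2000000 in
/-- Spectral properties of the Hessian operators (Proposition B.1 of the paper):
(i) every `∇²G_h(V)` is a self-adjoint operator on `S(H)` whose eigenvalues lie in `[0, C]`,
i.e. `0 ≤ ⟪∇²G_h(V)(A), A⟫_F ≤ C‖A‖_F²`; (ii) there is `c_m > 0` with
`⟪∇²G_m(Γ_m)(A), A⟫_F ≥ c_m‖A‖_F²`; (iii) there are `ε, ε' > 0` such that
`⟪∇²G_h(V)(A), A⟫_F ≥ (c_m/2)‖A‖_F²` whenever `‖h − m‖ ≤ ε` and `‖V − Γ_m‖_F ≤ ε'`. -/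
theorem stmt_13
    {d : ℕ} (hd : 1 ≤ d) (P : Measure Ω) [IsProbabilityMeasure P]
    (X : Ω → EuclideanSpace ℝ (Fin d)) (hX : Measurable X)
    -- `m` is the geometric median of `X`: the unique minimizer of `u ↦ E[‖X − u‖ − ‖X‖]`
    (m : EuclideanSpace ℝ (Fin d))
    (hm : ∀ u, (∫ ω, (‖X ω - m‖ - ‖X ω‖) ∂P) ≤ ∫ ω, (‖X ω - u‖ - ‖X ω‖) ∂P)
    (hm_unique : ∀ u, (∀ v, (∫ ω, (‖X ω - u‖ - ‖X ω‖) ∂P) ≤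
      ∫ ω, (‖X ω - v‖ - ‖X ω‖) ∂P) → u = m)
    -- `Γ` is the median covariation matrix: the unique minimizer of `G_m`
    (Γ : Mat d)
    (hΓ : ∀ V, Gfun P X m Γ ≤ Gfun P X m V)
    (hΓ_unique : ∀ V, (∀ W, Gfun P X m V ≤ Gfun P X m W) → V = Γ)
    -- Assumption 1
    (hA1 : ∃ u₁ u₂ : EuclideanSpace ℝ (Fin d), ‖u₁‖ = 1 ∧ ‖u₂‖ = 1 ∧
      LinearIndependent ℝ ![u₁, u₂] ∧
      0 < evariance (fun ω => ⟪u₁, X ω⟫) P ∧ 0 < evariance (fun ω => ⟪u₂, X ω⟫) P)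
    -- Assumption 2
    (hA2 : ∃ V₁ V₂ : Mat d, ‖V₁‖ = 1 ∧ ‖V₂‖ = 1 ∧ LinearIndependent ℝ ![V₁, V₂] ∧
      0 < evariance (fun ω => ⟪V₁, Ymat (X ω) m⟫) P ∧
      0 < evariance (fun ω => ⟪V₂, Ymat (X ω) m⟫) P)
    -- Assumption 3(b)
    (C : ℝ) (hC : 0 < C)
    (hA3 : ∀ (h : EuclideanSpace ℝ (Fin d)) (V : Mat d),
      (∫⁻ ω, (‖Ymat (X ω) h - V‖₊ : ℝ≥0∞)⁻¹ ∂P) ≤ ENNReal.ofReal C ∧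
      (∫⁻ ω, ((‖Ymat (X ω) h - V‖₊ : ℝ≥0∞) ^ 2)⁻¹ ∂P) ≤ ENNReal.ofReal C)
    :
    (∀ (h : EuclideanSpace ℝ (Fin d)) (V A B : Mat d),
      ⟪hessG P X h V A, B⟫ = ⟪A, hessG P X h V B⟫) ∧
    (∀ (h : EuclideanSpace ℝ (Fin d)) (V A : Mat d),
      0 ≤ ⟪hessG P X h V A, A⟫ ∧ ⟪hessG P X h V A, A⟫ ≤ C * ‖A‖ ^ 2) ∧
    ∃ cm : ℝ, 0 < cm ∧
      (∀ A : Mat d, cm * ‖A‖ ^ 2 ≤ ⟪hessG P X m Γ A, A⟫) ∧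
      ∃ ε ε' : ℝ, 0 < ε ∧ 0 < ε' ∧
        ∀ h : EuclideanSpace ℝ (Fin d), ‖h - m‖ ≤ ε →
          ∀ V : Mat d, ‖V - Γ‖ ≤ ε' →
            ∀ A : Mat d, cm / 2 * ‖A‖ ^ 2 ≤ ⟪hessG P X h V A, A⟫ := by
  refine ⟨?_, ?_, ?_⟩
  · -- (i) self-adjointness
    intro h V A B
    rw [inner_hessG P hX hC hA3, real_inner_comm (hessG P X h V B) A,
      inner_hessG P hX hC hA3]
    exact integral_congr_ae (Eventually.of_forall fun ω =>
      (inner_Ival_symm _ _ _).trans (real_inner_comm _ _))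
  · -- (i) eigenvalue bounds
    intro h V A
    rw [inner_hessG_self P hX hC hA3]
    constructor
    · exact integral_nonneg fun ω => qval_nonneg _ _
    · calc ∫ ω, qval (Ymat (X ω) h - V) A ∂P
          ≤ ∫ ω, ‖Ymat (X ω) h - V‖⁻¹ * ‖A‖ ^ 2 ∂P :=
            integral_mono (integrable_qval P hX hC hA3 h V A)
              ((integrable_inv P hX hC hA3 h V).1.mul_const _) (fun ω => qval_le _ _)
        _ = (∫ ω, ‖Ymat (X ω) h - V‖⁻¹ ∂P) * ‖A‖ ^ 2 := by rw [integral_mul_const]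
        _ ≤ C * ‖A‖ ^ 2 :=
            mul_le_mul_of_nonneg_right (integrable_inv P hX hC hA3 h V).2 (by positivity)
  · -- (ii) and (iii)
    have hlin : Continuous fun A : Mat d => hessG P X m Γ A := by
      let L : Mat d →ₗ[ℝ] Mat d :=
        { toFun := hessG P X m Γ
          map_add' := hessG_add P hX hC hA3 m Γ
          map_smul' := hessG_smul P hX hC hA3 m Γ }
      exact L.continuous_of_finiteDimensional
    have hQcont : Continuous fun A : Mat d => ⟪hessG P X m Γ A, A⟫ :=
      hlin.inner continuous_id
    have hsne : (Metric.sphere (0 : Mat d) 1).Nonempty := by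
      refine ⟨EuclideanSpace.single (⟨0, hd⟩, ⟨0, hd⟩) (1:ℝ), ?_⟩
      rw [mem_sphere_zero_iff_norm, EuclideanSpace.norm_single]
      norm_num
    obtain ⟨A₀, hA₀m, hminOn⟩ := (isCompact_sphere (0 : Mat d) 1).exists_isMinOn hsne
      hQcont.continuousOn
    have hA₀ : ‖A₀‖ = 1 := mem_sphere_zero_iff_norm.mp hA₀m
    set cm : ℝ := ⟪hessG P X m Γ A₀, A₀⟫ with hcmdef
    have hcm : 0 < cm := Q_pos P hX hC hA3 m Γ A₀ hA₀
    have hcmunit : ∀ A : Mat d, ‖A‖ = 1 → cm ≤ ⟪hessG P X m Γ A, A⟫ := fun A hA1 =>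
      hminOn (mem_sphere_zero_iff_norm.mpr hA1)
    have hcmall := unit_to_all P hX hC hA3 m Γ cm hcmunit
    -- tail control
    have hgmeas : Measurable fun ω => ‖Ymat (X ω) m - Γ‖⁻¹ := (measurable_U hX m Γ).norm.inv
    have hg0 : ∀ ω, (0:ℝ) ≤ ‖Ymat (X ω) m - Γ‖⁻¹ := fun ω => by positivity
    have hgi : Integrable (fun ω => ‖Ymat (X ω) m - Γ‖⁻¹) P :=
      (integrable_inv P hX hC hA3 m Γ).1
    have htail := tail_tendsto P hgmeas hg0 hgi hX.norm
    obtain ⟨R, hR⟩ := (htail.eventually_lt_const (show (0:ℝ) < cm/4 by positivity)).exists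
    set L : ℝ := 2*(R:ℝ) + 2*‖m‖ + 1 with hLdef
    have hL0 : (0:ℝ) < L := by positivity
    set ε : ℝ := min 1 (cm/(1600*C*L)) with hεdef
    set ε' : ℝ := cm/(1600*C) with hε'def
    have hε0 : 0 < ε := lt_min one_pos (by positivity)
    have hε'0 : 0 < ε' := by positivity
    refine ⟨cm, hcm, hcmall, ε, ε', hε0, hε'0, ?_⟩
    intro h hh V hV
    have hεle1 : ε ≤ 1 := min_le_left _ _
    have hεle2 : ε ≤ cm/(1600*C*L) := min_le_right _ _
    have hunit : ∀ A : Mat d, ‖A‖ = 1 → cm/2 ≤ ⟪hessG P X h V A, A⟫ := by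
      intro A hA
      have i1 : Integrable (fun ω => qval (Ymat (X ω) h - V) A) P :=
        integrable_qval P hX hC hA3 h V A
      have i0 : Integrable (fun ω => qval (Ymat (X ω) m - Γ) A) P :=
        integrable_qval P hX hC hA3 m Γ A
      have hT : MeasurableSet {ω | (R:ℝ) < ‖X ω‖} :=
        measurableSet_lt measurable_const hX.norm
      -- pointwise estimate off the tail
      have hptw : ∀ ω ∈ {ω | (R:ℝ) < ‖X ω‖}ᶜ,
          |qval (Ymat (X ω) h - V) A - qval (Ymat (X ω) m - Γ) A| ≤
          100*(L*ε + ε') * ((‖Ymat (X ω) h - V‖ ^ 2)⁻¹ + (‖Ymat (X ω) m - Γ‖ ^ 2)⁻¹) := by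
        intro ω hω
        have hxR : ‖X ω‖ ≤ (R:ℝ) := not_lt.mp hω
        have hhm : ‖h‖ ≤ ‖m‖ + 1 := by
          calc ‖h‖ = ‖(h - m) + m‖ := by rw [show h - m + m = h by abel]
            _ ≤ ‖h - m‖ + ‖m‖ := norm_add_le _ _
            _ ≤ ‖m‖ + 1 := by have := le_trans hh hεle1; linarith
        have hsum : ‖X ω - h‖ + ‖X ω - m‖ ≤ L := by
          have h1 : ‖X ω - h‖ ≤ ‖X ω‖ + ‖h‖ := norm_sub_le _ _
          have h2 : ‖X ω - m‖ ≤ ‖X ω‖ + ‖m‖ := norm_sub_le _ _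
          rw [hLdef]
          linarith
        have hdiff : ‖(Ymat (X ω) h - V) - (Ymat (X ω) m - Γ)‖ ≤ L*ε + ε' := by
          have e : (Ymat (X ω) h - V) - (Ymat (X ω) m - Γ)
              = (Ymat (X ω) h - Ymat (X ω) m) + (Γ - V) := by abel
          rw [e]
          calc ‖(Ymat (X ω) h - Ymat (X ω) m) + (Γ - V)‖
              ≤ ‖Ymat (X ω) h - Ymat (X ω) m‖ + ‖Γ - V‖ := norm_add_le _ _
            _ ≤ ‖h - m‖ * (‖X ω - h‖ + ‖X ω - m‖) + ε' := by
                apply add_le_add (norm_Ymat_sub_Ymat_le _ _ _)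
                rw [norm_sub_rev]; exact hV
            _ ≤ ε * L + ε' := by
                apply add_le_add_left
                apply mul_le_mul hh hsum (by positivity) hε0.le
            _ = L*ε + ε' := by ring
        calc |qval (Ymat (X ω) h - V) A - qval (Ymat (X ω) m - Γ) A|
            ≤ 100 * ‖(Ymat (X ω) h - V) - (Ymat (X ω) m - Γ)‖ *
              ((‖Ymat (X ω) h - V‖ ^ 2)⁻¹ + (‖Ymat (X ω) m - Γ‖ ^ 2)⁻¹) :=
              qval_lip _ _ _ hA
          _ ≤ 100*(L*ε + ε') * ((‖Ymat (X ω) h - V‖ ^ 2)⁻¹ + (‖Ymat (X ω) m - Γ‖ ^ 2)⁻¹) := by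
              apply mul_le_mul_of_nonneg_right _ (by positivity)
              linarith
      have hbound_int : Integrable (fun ω => 100*(L*ε + ε') *
          ((‖Ymat (X ω) h - V‖ ^ 2)⁻¹ + (‖Ymat (X ω) m - Γ‖ ^ 2)⁻¹)) P :=
        ((integrable_inv_sq P hX hC hA3 h V).1.add
          (integrable_inv_sq P hX hC hA3 m Γ).1).const_mul _
      have harith : 100*(L*ε + ε') * (C + C) ≤ cm/4 := by
        have hLε : L*ε ≤ cm/(1600*C) := by
          have h6 := mul_le_mul_of_nonneg_left hεle2 hL0.le
          calc L*ε ≤ L*(cm/(1600*C*L)) := h6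
            _ = cm/(1600*C) := by field_simp
        have hsum2 : L*ε + ε' ≤ cm/(800*C) := by
          have e2 : cm/(1600*C) + cm/(1600*C) = cm/(800*C) := by field_simp; ring
          rw [hε'def]
          linarith
        calc 100*(L*ε + ε')*(C + C) ≤ 100*(cm/(800*C))*(C + C) := by
              apply mul_le_mul_of_nonneg_right _ (by linarith)
              apply mul_le_mul_of_nonneg_left hsum2 (by norm_num)
          _ = cm/4 := by field_simp; ring
      have habs : |(∫ ω in {ω | (R:ℝ) < ‖X ω‖}ᶜ, qval (Ymat (X ω) h - V) A ∂P) -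
          ∫ ω in {ω | (R:ℝ) < ‖X ω‖}ᶜ, qval (Ymat (X ω) m - Γ) A ∂P| ≤ cm/4 := by
        rw [← integral_sub i1.integrableOn i0.integrableOn]
        calc |∫ ω in {ω | (R:ℝ) < ‖X ω‖}ᶜ,
              (qval (Ymat (X ω) h - V) A - qval (Ymat (X ω) m - Γ) A) ∂P|
            ≤ ∫ ω in {ω | (R:ℝ) < ‖X ω‖}ᶜ,
              |qval (Ymat (X ω) h - V) A - qval (Ymat (X ω) m - Γ) A| ∂P := by
              have h7 := norm_integral_le_integral_norm (μ := P.restrict {ω | (R:ℝ) < ‖X ω‖}ᶜ)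
                (f := fun ω => qval (Ymat (X ω) h - V) A - qval (Ymat (X ω) m - Γ) A)
              simpa [Real.norm_eq_abs] using h7
          _ ≤ ∫ ω in {ω | (R:ℝ) < ‖X ω‖}ᶜ, 100*(L*ε + ε') *
                ((‖Ymat (X ω) h - V‖ ^ 2)⁻¹ + (‖Ymat (X ω) m - Γ‖ ^ 2)⁻¹) ∂P :=
              setIntegral_mono_on ((i1.sub i0).abs.integrableOn)
                hbound_int.integrableOn hT.compl hptw
          _ ≤ ∫ ω, 100*(L*ε + ε') *
                ((‖Ymat (X ω) h - V‖ ^ 2)⁻¹ + (‖Ymat (X ω) m - Γ‖ ^ 2)⁻¹) ∂P :=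
              setIntegral_le_integral hbound_int (ae_of_all _ fun ω => by positivity)
          _ = 100*(L*ε + ε') * ((∫ ω, (‖Ymat (X ω) h - V‖ ^ 2)⁻¹ ∂P) +
                ∫ ω, (‖Ymat (X ω) m - Γ‖ ^ 2)⁻¹ ∂P) := by
              rw [integral_const_mul, integral_add (integrable_inv_sq P hX hC hA3 h V).1
                (integrable_inv_sq P hX hC hA3 m Γ).1]
          _ ≤ 100*(L*ε + ε')*(C + C) := by
              apply mul_le_mul_of_nonneg_left
                (add_le_add (integrable_inv_sq P hX hC hA3 h V).2
                  (integrable_inv_sq P hX hC hA3 m Γ).2)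
                (by positivity)
          _ ≤ cm/4 := harith
      have htail0 : ∫ ω in {ω | (R:ℝ) < ‖X ω‖}, qval (Ymat (X ω) m - Γ) A ∂P ≤ cm/4 := by
        have hmono : ∫ ω in {ω | (R:ℝ) < ‖X ω‖}, qval (Ymat (X ω) m - Γ) A ∂P ≤
            ∫ ω in {ω | (R:ℝ) < ‖X ω‖}, ‖Ymat (X ω) m - Γ‖⁻¹ ∂P :=
          setIntegral_mono_on i0.integrableOn hgi.integrableOn hT
            (fun ω _ => by
              have h8 := qval_le (Ymat (X ω) m - Γ) A
              rw [hA] at h8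
              simpa using h8)
        linarith [hR]
      have hQ0cm : cm ≤ ∫ ω, qval (Ymat (X ω) m - Γ) A ∂P := by
        have h9 := hcmall A
        rw [hA] at h9
        rw [inner_hessG_self P hX hC hA3] at h9
        simpa using h9
      have hsplit : (∫ ω in {ω | (R:ℝ) < ‖X ω‖}, qval (Ymat (X ω) m - Γ) A ∂P) +
          (∫ ω in {ω | (R:ℝ) < ‖X ω‖}ᶜ, qval (Ymat (X ω) m - Γ) A ∂P) =
          ∫ ω, qval (Ymat (X ω) m - Γ) A ∂P := integral_add_compl hT i0
      have hq1full : (∫ ω in {ω | (R:ℝ) < ‖X ω‖}ᶜ, qval (Ymat (X ω) h - V) A ∂P) ≤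
          ∫ ω, qval (Ymat (X ω) h - V) A ∂P :=
        setIntegral_le_integral i1 (ae_of_all _ fun ω => qval_nonneg _ _)
      rw [inner_hessG_self P hX hC hA3]
      have habs' := (abs_le.mp habs).1
      linarith
    have := unit_to_all P hX hC hA3 h V (cm/2) hunit
    exact this
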